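/- Let w : ℤ → (0, ∞) satisfy Σ_{m∈ℤ} w(m)/(|m| + 1) < ∞, and define M(t) = Σ_{m∈ℤ} w(m)/(m − t) for t ∈ ℝ ∖ ℤ. Then for every n ∈ ℤ the function M has exactly one zero in the open interval (n, n + 1). -/

import Mathlib

open Set

/-- Pointwise comparison: if the denominator stays `δ` away from zero. -/
private lemma pt_bound (w : ℤ → ℝ) (hw : ∀ m, 0 < w m) (m : ℤ) (t δ : ℝ) (hδ : 0 < δ)
    (h : δ ≤ |(m : ℝ) - t|) :
    |w m / ((m : ℝ) - t)| ≤ (1 + (|t| + 1) / δ) * (w m / (|(m : ℝ)| + 1)) := by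
  have hmt : (0:ℝ) < |(m : ℝ) - t| := lt_of_lt_of_le hδ h
  have hm1 : (0:ℝ) < |(m : ℝ)| + 1 := by positivity
  have habs : |w m / ((m : ℝ) - t)| = w m / |(m : ℝ) - t| := by
    rw [abs_div, abs_of_pos (hw m)]
  rw [habs]
  rw [div_le_iff₀ hmt] at *
  have key : |(m : ℝ)| + 1 ≤ (1 + (|t| + 1) / δ) * |(m : ℝ) - t| := by
    have h1 : |(m : ℝ)| ≤ |(m : ℝ) - t| + |t| := by
      have := abs_sub_abs_le_abs_sub (m : ℝ) t
      linarith [abs_sub_abs_le_abs_sub (m : ℝ) t]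
    have h2 : |t| + 1 ≤ (|t| + 1) / δ * |(m : ℝ) - t| := by
      have : (|t| + 1) / δ * δ ≤ (|t| + 1) / δ * |(m : ℝ) - t| := by
        apply mul_le_mul_of_nonneg_left h (by positivity)
      rwa [div_mul_cancel₀] at this
      exact ne_of_gt hδ
    nlinarith
  calc w m = w m / (|(m : ℝ)| + 1) * (|(m : ℝ)| + 1) := by field_simp
    _ ≤ w m / (|(m : ℝ)| + 1) * ((1 + (|t| + 1) / δ) * |(m : ℝ) - t|) := by
        exact mul_le_mul_of_nonneg_left key (le_of_lt (div_pos (hw m) hm1))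
    _ = (1 + (|t| + 1) / δ) * (w m / (|(m : ℝ)| + 1)) * |(m : ℝ) - t| := by ring

/-- Distance from `t ∈ (n, n+1)` to any integer. -/
private lemma dist_bound (n m : ℤ) (t : ℝ) (h1 : (n : ℝ) < t) (h2 : t < n + 1) :
    min (t - n) ((n : ℝ) + 1 - t) ≤ |(m : ℝ) - t| := by
  rcases le_or_gt m n with h | h
  · have hm : (m : ℝ) ≤ n := by exact_mod_cast h
    rw [abs_of_nonpos (by linarith), neg_sub]
    exact le_trans (min_le_left _ _) (by linarith)
  · have hm : (n : ℝ) + 1 ≤ m := by exact_mod_cast h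
    rw [abs_of_nonneg (by linarith)]
    exact le_trans (min_le_right _ _) (by linarith)

private lemma summable_M (w : ℤ → ℝ) (hw : ∀ m, 0 < w m)
    (hsum : Summable fun m : ℤ => w m / (|(m : ℝ)| + 1)) (n : ℤ) (t : ℝ)
    (h1 : (n : ℝ) < t) (h2 : t < n + 1) :
    Summable fun m : ℤ => w m / ((m : ℝ) - t) := by
  set δ := min (t - n) ((n : ℝ) + 1 - t) with hδdef
  have hδ : 0 < δ := lt_min (by linarith) (by linarith)
  apply Summable.of_norm_bounded (g := fun m => (1 + (|t| + 1) / δ) * (w m / (|(m : ℝ)| + 1)))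
    (hsum.mul_left _)
  intro m
  exact pt_bound w hw m t δ hδ (dist_bound n m t h1 h2)

/-- Strict monotonicity of each term. -/
private lemma term_mono (w : ℤ → ℝ) (hw : ∀ m, 0 < w m) (n m : ℤ) (t₁ t₂ : ℝ)
    (h1 : (n : ℝ) < t₁) (h3 : t₁ < t₂) (h4 : t₂ < n + 1) :
    w m / ((m : ℝ) - t₁) < w m / ((m : ℝ) - t₂) := by
  rcases le_or_gt m n with h | h
  · have hm : (m : ℝ) ≤ n := by exact_mod_cast h
    have e1 : w m / ((m : ℝ) - t₁) = -(w m / (t₁ - (m : ℝ))) := by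
      rw [show (m : ℝ) - t₁ = -(t₁ - (m : ℝ)) by ring, div_neg]
    have e2 : w m / ((m : ℝ) - t₂) = -(w m / (t₂ - (m : ℝ))) := by
      rw [show (m : ℝ) - t₂ = -(t₂ - (m : ℝ)) by ring, div_neg]
    rw [e1, e2, neg_lt_neg_iff]
    exact div_lt_div_of_pos_left (hw m) (by linarith) (by linarith)
  · have hm : (n : ℝ) + 1 ≤ m := by exact_mod_cast h
    exact div_lt_div_of_pos_left (hw m) (by linarith) (by linarith)

/-- Tail bound with the exceptional index `k` removed, uniform for denominators ≥ 1/2. -/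
private lemma tail_bound (w : ℤ → ℝ) (hw : ∀ m, 0 < w m)
    (hsum : Summable fun m : ℤ => w m / (|(m : ℝ)| + 1)) (k : ℤ) (t B : ℝ)
    (hB : |t| ≤ B)
    (h : ∀ m : ℤ, m ≠ k → (1:ℝ)/2 ≤ |(m : ℝ) - t|) :
    |∑' m : ℤ, (if m = k then 0 else w m / ((m : ℝ) - t))| ≤
      (1 + 2 * (B + 1)) * ∑' m : ℤ, w m / (|(m : ℝ)| + 1) := by
  have hS : Summable (fun m : ℤ => (1 + 2 * (B + 1)) * (w m / (|(m : ℝ)| + 1))) :=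
    hsum.mul_left _
  have hbd : ∀ m : ℤ, ‖if m = k then (0:ℝ) else w m / ((m : ℝ) - t)‖ ≤
      (1 + 2 * (B + 1)) * (w m / (|(m : ℝ)| + 1)) := by
    intro m
    by_cases hm : m = k
    · have h0 : (0:ℝ) ≤ B := le_trans (abs_nonneg t) hB
      have h1 := hw m
      have h2 : (0:ℝ) < |(m : ℝ)| + 1 := by positivity
      simp only [if_pos hm, norm_zero]
      positivity
    · simp only [if_neg hm, Real.norm_eq_abs]
      calc |w m / ((m : ℝ) - t)| ≤ (1 + (|t| + 1) / (1/2)) * (w m / (|(m : ℝ)| + 1)) :=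
            pt_bound w hw m t (1/2) (by norm_num) (h m hm)
        _ ≤ (1 + 2 * (B + 1)) * (w m / (|(m : ℝ)| + 1)) := by
            have h2 : (0:ℝ) < |(m : ℝ)| + 1 := by positivity
            apply mul_le_mul_of_nonneg_right _ (le_of_lt (div_pos (hw m) h2))
            rw [div_div_eq_mul_div]
            nlinarith [abs_nonneg t, hB]
  have := tsum_of_norm_bounded (hS.hasSum) hbd
  rw [tsum_mul_left] at this
  simpa using this

/-- **Unique zero of `M` in each interval `(n, n+1)`.**
For positive weights `w : ℤ → (0,∞)` with `∑ w(m)/(|m|+1) < ∞`, the function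
`M(t) = ∑_{m ∈ ℤ} w(m)/(m - t)` has exactly one zero in each open interval `(n, n+1)`. -/
theorem stmt17 (w : ℤ → ℝ) (hw : ∀ m, 0 < w m)
    (hsum : Summable fun m : ℤ => w m / (|(m : ℝ)| + 1)) :
    ∀ n : ℤ, ∃! t : ℝ, t ∈ Set.Ioo (n : ℝ) (n + 1) ∧
      (∑' m : ℤ, w m / ((m : ℝ) - t)) = 0 := by
  intro n
  set S := ∑' m : ℤ, w m / (|(m : ℝ)| + 1) with hSdef
  have hS0 : 0 ≤ S :=
    tsum_nonneg fun m => le_of_lt (div_pos (hw m) (by positivity))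
  set B : ℝ := |(n : ℝ)| + 1 with hBdef
  have hB1 : (1:ℝ) ≤ B := by simp only [hBdef]; linarith [abs_nonneg ((n:ℝ))]
  set C : ℝ := 1 + 2 * (B + 1) with hCdef
  have hC0 : 0 < C := by nlinarith
  set M : ℝ → ℝ := fun t => ∑' m : ℤ, w m / ((m : ℝ) - t) with hMdef
  have habs_t : ∀ t : ℝ, (n : ℝ) < t → t < n + 1 → |t| ≤ B := by
    intro t h1 h2
    rw [abs_le]
    have := le_abs_self (n : ℝ)
    have := neg_abs_le (n : ℝ)
    constructor <;> [skip; skip] <;> simp only [hBdef] <;> linarith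
  have hmono : ∀ t₁ t₂ : ℝ, (n:ℝ) < t₁ → t₁ < t₂ → t₂ < n + 1 → M t₁ < M t₂ := by
    intro t₁ t₂ h1 h2 h3
    exact Summable.tsum_lt_tsum (fun m => le_of_lt (term_mono w hw n m t₁ t₂ h1 h2 h3))
      (term_mono w hw n n t₁ t₂ h1 h2 h3)
      (summable_M w hw hsum n t₁ h1 (by linarith))
      (summable_M w hw hsum n t₂ (by linarith) h3)
  -- the two endpoints
  have hCS0 : 0 ≤ C * S := mul_nonneg (le_of_lt hC0) hS0
  set D : ℝ := 2 * (C * S + 1) with hDdef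
  have hD0 : 0 < D := by nlinarith
  set ε₁ : ℝ := min (1/4) (w n / D) with hε₁def
  set ε₂ : ℝ := min (1/4) (w (n+1) / D) with hε₂def
  have hε₁0 : 0 < ε₁ := lt_min (by norm_num) (div_pos (hw n) hD0)
  have hε₂0 : 0 < ε₂ := lt_min (by norm_num) (div_pos (hw (n+1)) hD0)
  have hε₁4 : ε₁ ≤ 1/4 := min_le_left _ _
  have hε₂4 : ε₂ ≤ 1/4 := min_le_left _ _
  set a : ℝ := (n : ℝ) + ε₁ with hadef
  set b : ℝ := (n : ℝ) + 1 - ε₂ with hbdef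
  have hab : a < b := by simp only [hadef, hbdef]; linarith
  have han : (n:ℝ) < a := by simp only [hadef]; linarith
  have han' : a < n + 1 := by simp only [hadef]; linarith
  have hbn : (n:ℝ) < b := by simp only [hbdef]; linarith
  have hbn' : b < n + 1 := by simp only [hbdef]; linarith
  clear_value S B C M D ε₁ ε₂ a b
  -- M a < 0
  have hMa : M a < 0 := by
    have hsep : ∀ m : ℤ, m ≠ n → (1:ℝ)/2 ≤ |(m : ℝ) - a| := by
      intro m hm
      rcases lt_or_gt_of_ne hm with h | h
      · have : (m : ℝ) ≤ (n : ℝ) - 1 := by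
          have : m ≤ n - 1 := by omega
          calc (m:ℝ) ≤ ((n-1 : ℤ) : ℝ) := by exact_mod_cast this
            _ = (n:ℝ) - 1 := by push_cast; ring
        rw [abs_of_nonpos (by simp only [hadef]; linarith)]
        simp only [hadef]; linarith
      · have : (n : ℝ) + 1 ≤ m := by exact_mod_cast h
        rw [abs_of_nonneg (by simp only [hadef]; linarith)]
        simp only [hadef]; linarith
    have htail := tail_bound w hw hsum n a B (habs_t a han han') hsep
    rw [← hSdef] at htail
    have hdec := Summable.tsum_eq_add_tsum_ite (summable_M w hw hsum n a han han') n
    have hterm : w n / ((n : ℝ) - a) = -(w n / ε₁) := by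
      rw [show (n:ℝ) - a = -ε₁ by simp only [hadef]; ring, div_neg]
    have hbig : D ≤ w n / ε₁ := by
      rw [le_div_iff₀ hε₁0]
      have h1 : ε₁ ≤ w n / D := by rw [hε₁def]; exact min_le_right _ _
      calc D * ε₁ ≤ D * (w n / D) := by
            exact mul_le_mul_of_nonneg_left h1 (le_of_lt hD0)
        _ = w n := by field_simp
    have habs' := abs_le.mp htail
    have hCS : C * S ≤ (1 + 2 * (B + 1)) * S := by rw [← hCdef]
    simp only [hMdef]
    rw [hdec, hterm]
    have : (∑' m : ℤ, if m = n then (0:ℝ) else w m / ((m : ℝ) - a)) ≤ C * S := by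
      calc _ ≤ |∑' m : ℤ, if m = n then (0:ℝ) else w m / ((m : ℝ) - a)| := le_abs_self _
        _ ≤ (1 + 2 * (B + 1)) * S := htail
        _ = C * S := by rw [← hCdef]
    linarith
  -- M b > 0
  have hMb : 0 < M b := by
    have hsep : ∀ m : ℤ, m ≠ n + 1 → (1:ℝ)/2 ≤ |(m : ℝ) - b| := by
      intro m hm
      rcases lt_or_gt_of_ne hm with h | h
      · have : (m : ℝ) ≤ (n : ℝ) := by
          have : m ≤ n := by omega
          exact_mod_cast this
        rw [abs_of_nonpos (by simp only [hbdef]; linarith)]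
        simp only [hbdef]; linarith
      · have : (n : ℝ) + 2 ≤ m := by
          have : n + 2 ≤ m := by omega
          calc (n:ℝ) + 2 = ((n+2 : ℤ) : ℝ) := by push_cast; ring
            _ ≤ m := by exact_mod_cast this
        rw [abs_of_nonneg (by simp only [hbdef]; linarith)]
        simp only [hbdef]; linarith
    have htail := tail_bound w hw hsum (n+1) b B (habs_t b hbn hbn') hsep
    rw [← hSdef, ← hCdef] at htail
    have hdec := Summable.tsum_eq_add_tsum_ite (summable_M w hw hsum n b hbn hbn') (n+1)
    have hterm : w (n+1) / (((n+1 : ℤ) : ℝ) - b) = w (n+1) / ε₂ := by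
      congr 1
      push_cast
      simp only [hbdef]; ring
    have hbig : D ≤ w (n+1) / ε₂ := by
      rw [le_div_iff₀ hε₂0]
      have h1 : ε₂ ≤ w (n+1) / D := by rw [hε₂def]; exact min_le_right _ _
      calc D * ε₂ ≤ D * (w (n+1) / D) := by
            exact mul_le_mul_of_nonneg_left h1 (le_of_lt hD0)
        _ = w (n+1) := by field_simp
    simp only [hMdef]
    rw [hdec, hterm]
    have : -(C * S) ≤ (∑' m : ℤ, if m = n + 1 then (0:ℝ) else w m / ((m : ℝ) - b)) :=
      (abs_le.mp htail).1
    linarith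
  -- continuity on [a, b]
  have hcont : ContinuousOn M (Icc a b) := by
    rw [hMdef]
    set δ : ℝ := min ε₁ ε₂ with hδdef
    have hδ0 : 0 < δ := lt_min hε₁0 hε₂0
    apply continuousOn_tsum (u := fun m : ℤ => (1 + (B + 1) / δ) * (w m / (|(m : ℝ)| + 1)))
    · intro m
      apply ContinuousOn.div continuousOn_const (by fun_prop)
      intro t ht
      have h1 : (n:ℝ) < t := lt_of_lt_of_le han ht.1
      have h2 : t < n + 1 := lt_of_le_of_lt ht.2 hbn'
      have := dist_bound n m t h1 h2
      have hδle : δ ≤ min (t - n) ((n:ℝ) + 1 - t) := by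
        apply le_min
        · exact le_trans (min_le_left _ _) (by simp only [hadef] at ht ⊢; linarith [ht.1])
        · exact le_trans (min_le_right _ _) (by simp only [hbdef] at ht ⊢; linarith [ht.2])
      intro hzero
      rw [hzero, abs_zero] at this
      exact absurd (lt_of_lt_of_le hδ0 (le_trans hδle this)) (lt_irrefl 0)
    · exact hsum.mul_left _
    · intro m t ht
      have h1 : (n:ℝ) < t := lt_of_lt_of_le han ht.1
      have h2 : t < n + 1 := lt_of_le_of_lt ht.2 hbn'
      have hδle : δ ≤ min (t - n) ((n:ℝ) + 1 - t) := by
        apply le_min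
        · exact le_trans (min_le_left _ _) (by simp only [hadef] at ht ⊢; linarith [ht.1])
        · exact le_trans (min_le_right _ _) (by simp only [hbdef] at ht ⊢; linarith [ht.2])
      have hdb := le_trans hδle (dist_bound n m t h1 h2)
      have := pt_bound w hw m t δ hδ0 hdb
      rw [Real.norm_eq_abs]
      refine le_trans this ?_
      apply mul_le_mul_of_nonneg_right _ (le_of_lt (div_pos (hw m) (by positivity)))
      have hBt : |t| ≤ B := habs_t t h1 h2
      have hq : (|t| + 1) / δ ≤ (B + 1) / δ := by gcongr
      linarith
  -- intermediate value theorem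
  have hivt := intermediate_value_Icc (le_of_lt hab) hcont
  have h0mem : (0:ℝ) ∈ Icc (M a) (M b) := ⟨le_of_lt hMa, le_of_lt hMb⟩
  obtain ⟨t, htmem, htval⟩ := hivt h0mem
  have htIoo : t ∈ Set.Ioo (n : ℝ) (n + 1) :=
    ⟨lt_of_lt_of_le han htmem.1, lt_of_le_of_lt htmem.2 hbn'⟩
  have htval' : (∑' m : ℤ, w m / ((m : ℝ) - t)) = 0 := by
    have h := htval; simp only [hMdef] at h; exact h
  refine ⟨t, ⟨htIoo, htval'⟩, ?_⟩
  intro t' ht'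
  obtain ⟨ht'Ioo, ht'val⟩ := ht'
  have ht'M : M t' = 0 := by simp only [hMdef]; exact ht'val
  by_contra hne
  rcases lt_or_gt_of_ne hne with h | h
  · have := hmono t' t ht'Ioo.1 h htIoo.2
    rw [ht'M, htval] at this
    exact lt_irrefl 0 this
  · have := hmono t t' htIoo.1 h ht'Ioo.2
    rw [ht'M, htval] at this
    exact lt_irrefl 0 this
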